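/- Let H be a graph with vertex partition V(H) = U ⊔ W, let M be the U×W biadjacency matrix with ρ = ‖M‖, and write λ = λ(H), λ_U = λ(H[U]), λ_W = λ(H[W]). Then (λ − λ_U)(λ − λ_W) ≤ ρ² ≤ e_H(U,W). -/

import Mathlib

open scoped Classical BigOperators

/-- Adjacency matrix of a simple graph on `Fin n`, with real entries. -/
noncomputable def adjMat {n : ℕ} (G : SimpleGraph (Fin n)) : Matrix (Fin n) (Fin n) ℝ :=
  fun i j => if G.Adj i j then 1 else 0

/-- Spectral radius (largest real eigenvalue) of a real matrix. -/
noncomputable def specRad {α : Type*} [Fintype α] (A : Matrix α α ℝ) : ℝ :=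
  sSup {μ : ℝ | ∃ x : α → ℝ, x ≠ 0 ∧ A.mulVec x = μ • x}

/-- The ℓ^p norm of a finitely supported real vector, for a real exponent `p`. -/
noncomputable def pNorm {α : Type*} [Fintype α] (p : ℝ) (x : α → ℝ) : ℝ :=
  (∑ i, |x i| ^ p) ^ (1 / p)

/-- The ℓ^p → ℓ^r operator norm of a real matrix. -/
noncomputable def opNorm {α β : Type*} [Fintype α] [Fintype β] (p r : ℝ)
    (A : Matrix β α ℝ) : ℝ :=
  sSup {c : ℝ | ∃ x : α → ℝ, x ≠ 0 ∧ c = pNorm r (A.mulVec x) / pNorm p x}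

/-- Adjacency matrix of the induced subgraph on a vertex subset. -/
noncomputable def inducedMat {n : ℕ} (G : SimpleGraph (Fin n)) (U : Finset (Fin n)) :
    Matrix {x // x ∈ U} {x // x ∈ U} ℝ :=
  fun i j => adjMat G i.1 j.1

/-- Biadjacency matrix of the cut between U and its complement. -/
noncomputable def cutMat {n : ℕ} (G : SimpleGraph (Fin n)) (U : Finset (Fin n)) :
    Matrix {x // x ∈ U} {x // x ∈ Uᶜ} ℝ :=
  fun i j => adjMat G i.1 j.1

section aux
variable {α : Type*} [Fintype α]

lemma dot_self_nonneg (x : α → ℝ) : 0 ≤ dotProduct x x :=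
  Finset.sum_nonneg fun i _ => mul_self_nonneg _

lemma dot_self_pos {x : α → ℝ} (hx : x ≠ 0) : 0 < dotProduct x x := by
  rcases (dot_self_nonneg x).lt_or_eq with h | h
  · exact h
  · exfalso; apply hx; funext i
    have := (Finset.sum_eq_zero_iff_of_nonneg (fun i _ => mul_self_nonneg (x i))).mp h.symm i
      (Finset.mem_univ i)
    exact mul_self_eq_zero.mp this

variable {A : Matrix α α ℝ} (hA : A.IsHermitian)

/-- max eigenvalue -/
noncomputable def mEig [Nonempty α] (hA : A.IsHermitian) : ℝ :=
  Finset.univ.sup' Finset.univ_nonempty hA.eigenvalues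

lemma rayleigh_le_mEig [Nonempty α] (x : α → ℝ) :
    dotProduct x (A.mulVec x) ≤ mEig hA * dotProduct x x := by
  classical
  set V : Matrix α α ℝ := (hA.eigenvectorUnitary : Matrix α α ℝ) with hV
  set d : α → ℝ := hA.eigenvalues with hd
  have hVmem : V ∈ Matrix.unitaryGroup α ℝ := hA.eigenvectorUnitary.2
  have hVV : V * star V = 1 := Matrix.mem_unitaryGroup_iff.mp hVmem
  set y : α → ℝ := Matrix.vecMul x V with hy
  have hspec : A = V * Matrix.diagonal d * star V := by
    simpa using hA.spectral_theorem
  have h1 : dotProduct x (A.mulVec x) = ∑ i, d i * y i ^ 2 := by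
    rw [hspec]
    rw [← Matrix.mulVec_mulVec, ← Matrix.mulVec_mulVec, Matrix.dotProduct_mulVec]
    have hyeq : Matrix.vecMul x V = y := rfl
    rw [hyeq]
    have hsv : (star V).mulVec x = y := by
      funext i
      simp [Matrix.mulVec, Matrix.vecMul, dotProduct, hy, mul_comm]
    rw [hsv]
    simp [dotProduct, Matrix.mulVec_diagonal, pow_two]; ring_nf
    exact Finset.sum_congr rfl fun i _ => by ring
  have h2 : dotProduct x x = ∑ i, y i ^ 2 := by
    have hsv : (star V).mulVec x = y := by
      funext i
      simp [Matrix.mulVec, Matrix.vecMul, dotProduct, hy, mul_comm]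
    have : dotProduct y y = dotProduct x ((V * star V).mulVec x) := by
      rw [← Matrix.mulVec_mulVec, Matrix.dotProduct_mulVec, hsv]
    rw [hVV] at this
    simp [Matrix.one_mulVec] at this
    have := this.symm
    simpa [dotProduct, pow_two] using this
  rw [h1, h2, Finset.mul_sum]
  apply Finset.sum_le_sum
  intro i _
  have hdm : d i ≤ mEig hA := Finset.le_sup' _ (Finset.mem_univ i)
  exact mul_le_mul_of_nonneg_right hdm (sq_nonneg _)

end aux

section aux2
variable {α : Type*} [Fintype α] {A : Matrix α α ℝ}

lemma isGreatest_mEig [Nonempty α] (hA : A.IsHermitian) :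
    IsGreatest {μ : ℝ | ∃ x : α → ℝ, x ≠ 0 ∧ A.mulVec x = μ • x} (mEig hA) := by
  constructor
  · obtain ⟨j, -, hj⟩ := Finset.exists_mem_eq_sup' (Finset.univ_nonempty (α := α)) hA.eigenvalues
    refine ⟨⇑(hA.eigenvectorBasis j), ?_, ?_⟩
    · intro h
      have hb : hA.eigenvectorBasis j = 0 := by
        ext i
        exact congrFun h i
      have := hA.eigenvectorBasis.orthonormal.1 j
      rw [hb] at this
      simp at this
    · have := hA.mulVec_eigenvectorBasis j
      rw [mEig, hj]
      exact this
  · rintro μ ⟨x, hx, hAx⟩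
    have h1 : dotProduct x (A.mulVec x) ≤ mEig hA * dotProduct x x :=
      rayleigh_le_mEig hA x
    rw [hAx] at h1
    have h2 : dotProduct x (μ • x) = μ * dotProduct x x := by
      simp [dotProduct, Finset.mul_sum]
      exact Finset.sum_congr rfl fun i _ => by ring
    rw [h2] at h1
    exact le_of_mul_le_mul_right h1 (dot_self_pos hx)

lemma specRad_eq_mEig [Nonempty α] (hA : A.IsHermitian) : specRad A = mEig hA :=
  (isGreatest_mEig hA).csSup_eq

lemma exists_eigvec_specRad [Nonempty α] (hA : A.IsHermitian) :
    ∃ x : α → ℝ, x ≠ 0 ∧ A.mulVec x = specRad A • x := by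
  rw [specRad_eq_mEig hA]; exact (isGreatest_mEig hA).1

lemma eig_le_specRad (hA : A.IsHermitian) {μ : ℝ} {x : α → ℝ} (hx : x ≠ 0) (hAx : A.mulVec x = μ • x) :
    μ ≤ specRad A := by
  have : Nonempty α := by
    by_contra h
    rw [not_nonempty_iff] at h
    exact hx (funext fun i => (IsEmpty.false i).elim)
  rw [specRad_eq_mEig hA]
  exact (isGreatest_mEig hA).2 ⟨x, hx, hAx⟩

lemma specRad_empty [IsEmpty α] (A : Matrix α α ℝ) : specRad A = 0 := by
  have : {μ : ℝ | ∃ x : α → ℝ, x ≠ 0 ∧ A.mulVec x = μ • x} = ∅ := by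
    ext μ; simp only [Set.mem_setOf_eq, Set.mem_empty_iff_false, iff_false]
    rintro ⟨x, hx, -⟩
    exact hx (funext fun i => (IsEmpty.false i).elim)
  rw [specRad, this, Real.sSup_empty]

lemma rayleigh_le_specRad (hA : A.IsHermitian) (x : α → ℝ) :
    dotProduct x (A.mulVec x) ≤ specRad A * dotProduct x x := by
  cases isEmpty_or_nonempty α with
  | inl h =>
    simp [dotProduct]
  | inr h =>
    rw [specRad_eq_mEig hA]
    exact rayleigh_le_mEig hA x

end aux2

section opn
variable {α β : Type*} [Fintype α] [Fintype β]

lemma pNorm_two_eq_sqrt (x : α → ℝ) : pNorm 2 x = Real.sqrt (dotProduct x x) := by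
  rw [pNorm, ← Real.sqrt_eq_rpow]
  congr 1
  rw [dotProduct]
  refine Finset.sum_congr rfl fun i _ => ?_
  rw [show (2:ℝ) = ((2:ℕ):ℝ) by norm_num, Real.rpow_natCast]
  rw [sq_abs, pow_two]

noncomputable def frobSq (M : Matrix β α ℝ) : ℝ := ∑ i, ∑ j, M i j ^ 2

lemma frobSq_nonneg (M : Matrix β α ℝ) : 0 ≤ frobSq M :=
  Finset.sum_nonneg fun i _ => Finset.sum_nonneg fun j _ => sq_nonneg _

lemma mulVec_dot_le (M : Matrix β α ℝ) (x : α → ℝ) :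
    dotProduct (M.mulVec x) (M.mulVec x) ≤ frobSq M * dotProduct x x := by
  rw [dotProduct, frobSq, Finset.sum_mul]
  apply Finset.sum_le_sum
  intro i _
  have h := Finset.sum_mul_sq_le_sq_mul_sq Finset.univ (fun j => M i j) x
  calc M.mulVec x i * M.mulVec x i = (∑ j, M i j * x j) ^ 2 := by
        rw [Matrix.mulVec, dotProduct, pow_two]
    _ ≤ (∑ j, M i j ^ 2) * ∑ j, x j ^ 2 := h
    _ = (∑ j, M i j ^ 2) * dotProduct x x := by
        congr 1
        exact Finset.sum_congr rfl fun j _ => (pow_two _)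

lemma mem_opSet_le (M : Matrix β α ℝ) {c : ℝ}
    (hc : c ∈ {c : ℝ | ∃ x : α → ℝ, x ≠ 0 ∧ c = pNorm 2 (M.mulVec x) / pNorm 2 x}) :
    c ≤ Real.sqrt (frobSq M) := by
  obtain ⟨x, hx, rfl⟩ := hc
  rw [pNorm_two_eq_sqrt, pNorm_two_eq_sqrt]
  have hxx : 0 < dotProduct x x := dot_self_pos hx
  rw [div_le_iff₀ (Real.sqrt_pos.mpr hxx)]
  rw [← Real.sqrt_mul (frobSq_nonneg M)]
  exact Real.sqrt_le_sqrt (mulVec_dot_le M x)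

lemma opNorm_le_sqrt_frob (M : Matrix β α ℝ) :
    opNorm 2 2 M ≤ Real.sqrt (frobSq M) :=
  Real.sSup_le (fun _ hc => mem_opSet_le M hc) (Real.sqrt_nonneg _)

lemma opNorm_nonneg (M : Matrix β α ℝ) : 0 ≤ opNorm 2 2 M := by
  apply Real.sSup_nonneg
  rintro c ⟨x, hx, rfl⟩
  apply div_nonneg <;> · rw [pNorm_two_eq_sqrt]; exact Real.sqrt_nonneg _

lemma opNorm_sq_le_frobSq (M : Matrix β α ℝ) : opNorm 2 2 M ^ 2 ≤ frobSq M := by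
  have h := opNorm_le_sqrt_frob M
  calc opNorm 2 2 M ^ 2 ≤ Real.sqrt (frobSq M) ^ 2 :=
        pow_le_pow_left₀ (opNorm_nonneg M) h 2
    _ = frobSq M := Real.sq_sqrt (frobSq_nonneg M)

lemma sqrt_mulVec_le (M : Matrix β α ℝ) (x : α → ℝ) :
    Real.sqrt (dotProduct (M.mulVec x) (M.mulVec x))
      ≤ opNorm 2 2 M * Real.sqrt (dotProduct x x) := by
  by_cases hx : x = 0
  · subst hx
    simp [Matrix.mulVec_zero, dotProduct]
  · have hxx : 0 < dotProduct x x := dot_self_pos hx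
    have hs : 0 < Real.sqrt (dotProduct x x) := Real.sqrt_pos.mpr hxx
    rw [← div_le_iff₀ hs]
    have hmem : Real.sqrt (dotProduct (M.mulVec x) (M.mulVec x))
        / Real.sqrt (dotProduct x x)
        ∈ {c : ℝ | ∃ y : α → ℝ, y ≠ 0 ∧ c = pNorm 2 (M.mulVec y) / pNorm 2 y} := by
      exact ⟨x, hx, by rw [pNorm_two_eq_sqrt, pNorm_two_eq_sqrt]⟩
    exact le_csSup ⟨Real.sqrt (frobSq M), fun c hc => mem_opSet_le M hc⟩ hmem

end opn

section graph
variable {n : ℕ} (G : SimpleGraph (Fin n))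

lemma adjMat_herm : (adjMat G).IsHermitian := by
  ext i j
  simp [Matrix.conjTranspose_apply, adjMat, G.adj_comm]

lemma inducedMat_herm (U : Finset (Fin n)) : (inducedMat G U).IsHermitian := by
  ext i j
  simp [Matrix.conjTranspose_apply, inducedMat, adjMat, G.adj_comm]

lemma adj_specRad_nonneg : 0 ≤ specRad (adjMat G) := by
  cases isEmpty_or_nonempty (Fin n) with
  | inl h => rw [specRad_empty]
  | inr h =>
    obtain ⟨i0⟩ := h
    have hr := rayleigh_le_specRad (adjMat_herm G) (Pi.single i0 1)
    have h1 : dotProduct (Pi.single i0 1) ((adjMat G).mulVec (Pi.single i0 1)) = 0 := by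
      simp [dotProduct, Matrix.mulVec, Pi.single_apply, Finset.mul_sum, adjMat]
      apply Finset.sum_eq_zero
      intro i _
      by_cases hi : i = i0
      · subst hi; simp [SimpleGraph.irrefl]
      · simp [hi]
    have h2 : dotProduct (Pi.single i0 (1:ℝ)) (Pi.single i0 1) = 1 := by
      simp [dotProduct, Pi.single_apply]
    rw [h1, h2, mul_one] at hr
    exact hr

lemma induced_specRad_le (U : Finset (Fin n)) :
    specRad (inducedMat G U) ≤ specRad (adjMat G) := by
  by_cases hU : U.Nonempty
  · have : Nonempty {x // x ∈ U} := ⟨⟨hU.choose, hU.choose_spec⟩⟩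
    obtain ⟨y, hy, hBy⟩ := exists_eigvec_specRad (inducedMat_herm G U)
    set lamU := specRad (inducedMat G U) with hlamU
    set z : Fin n → ℝ := fun i => if h : i ∈ U then y ⟨i, h⟩ else 0 with hz
    have hz_mem : ∀ (j : {x // x ∈ U}), z j.1 = y j := by
      intro j; simp [hz, j.2]
    have hz_ne : z ≠ 0 := by
      intro h0
      apply hy
      funext j
      have := congrFun h0 j.1
      rwa [hz_mem j] at this
    have hzz : dotProduct z z = dotProduct y y := by
      rw [dotProduct, dotProduct]
      rw [← Finset.sum_add_sum_compl U (fun i => z i * z i)]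
      have h2 : ∑ i ∈ Uᶜ, z i * z i = 0 := by
        apply Finset.sum_eq_zero
        intro i hi
        rw [Finset.mem_compl] at hi
        simp [hz, hi]
      rw [h2, add_zero, ← Finset.sum_attach U (fun i => z i * z i)]
      rw [Finset.univ_eq_attach]
      exact Finset.sum_congr rfl fun j _ => by rw [hz_mem j]
    have hray : dotProduct z ((adjMat G).mulVec z) = lamU * dotProduct z z := by
      rw [dotProduct]
      rw [← Finset.sum_add_sum_compl U (fun i => z i * (adjMat G).mulVec z i)]
      have h2 : ∑ i ∈ Uᶜ, z i * (adjMat G).mulVec z i = 0 := by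
        apply Finset.sum_eq_zero
        intro i hi
        rw [Finset.mem_compl] at hi
        simp [hz, hi]
      rw [h2, add_zero, ← Finset.sum_attach U (fun i => z i * (adjMat G).mulVec z i)]
      have h3 : ∀ (j : {x // x ∈ U}), (adjMat G).mulVec z j.1 = lamU * y j := by
        intro j
        have hb := congrFun hBy j
        rw [Matrix.mulVec, dotProduct]
        rw [← Finset.sum_add_sum_compl U (fun i => adjMat G j.1 i * z i)]
        have h4 : ∑ i ∈ Uᶜ, adjMat G j.1 i * z i = 0 := by
          apply Finset.sum_eq_zero
          intro i hi
          rw [Finset.mem_compl] at hi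
          simp [hz, hi]
        rw [h4, add_zero, ← Finset.sum_attach U (fun i => adjMat G j.1 i * z i)]
        have h5 : ∑ i ∈ U.attach, adjMat G j.1 i.1 * z i.1
            = (inducedMat G U).mulVec y j := by
          rw [Matrix.mulVec, dotProduct, Finset.univ_eq_attach]
          exact Finset.sum_congr rfl fun i _ => by rw [hz_mem i]; rfl
        rw [h5, hBy]
        rfl
      calc ∑ j ∈ U.attach, z j.1 * (adjMat G).mulVec z j.1
          = ∑ j ∈ U.attach, y j * (lamU * y j) := by
            exact Finset.sum_congr rfl fun j _ => by rw [hz_mem j, h3 j]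
        _ = lamU * dotProduct y y := by
            rw [dotProduct, Finset.univ_eq_attach, Finset.mul_sum]
            exact Finset.sum_congr rfl fun j _ => by ring
        _ = lamU * dotProduct z z := by rw [hzz]
    have hr := rayleigh_le_specRad (adjMat_herm G) z
    rw [hray] at hr
    exact le_of_mul_le_mul_right hr (dot_self_pos hz_ne)
  · have : IsEmpty {x // x ∈ U} := by
      rw [Finset.not_nonempty_iff_eq_empty] at hU
      subst hU
      exact ⟨fun x => absurd x.2 (Finset.notMem_empty x.1)⟩
    rw [specRad_empty]
    exact adj_specRad_nonneg G

end graph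


/-- Spectral cut bound (b): (λ − λ_U)(λ − λ_W) ≤ ‖M‖² ≤ e_H(U,W), where W = Uᶜ. -/
theorem stmt8 (n : ℕ) (G : SimpleGraph (Fin n)) (U : Finset (Fin n)) :
    (specRad (adjMat G) - specRad (inducedMat G U))
          * (specRad (adjMat G) - specRad (inducedMat G Uᶜ))
        ≤ opNorm 2 2 (cutMat G U) ^ 2 ∧
      opNorm 2 2 (cutMat G U) ^ 2
        ≤ ∑ u ∈ U, ∑ w ∈ Uᶜ, if G.Adj u w then (1 : ℝ) else 0 := by
  have hadjsym : ∀ a b : Fin n, adjMat G a b = adjMat G b a := by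
    intro a b; simp [adjMat, G.adj_comm]
  constructor
  · -- first inequality
    set lam := specRad (adjMat G) with hlam
    set lamU := specRad (inducedMat G U) with hlamU
    set lamW := specRad (inducedMat G Uᶜ) with hlamW
    set opN := opNorm 2 2 (cutMat G U) with hopN
    have hUle : lamU ≤ lam := induced_specRad_le G U
    have hWle : lamW ≤ lam := induced_specRad_le G Uᶜ
    cases isEmpty_or_nonempty (Fin n) with
    | inl h =>
      have h1 : lam = 0 := specRad_empty _
      have hU0 : IsEmpty {x // x ∈ U} := ⟨fun x => IsEmpty.false x.1⟩
      have hW0 : IsEmpty {x // x ∈ Uᶜ} := ⟨fun x => IsEmpty.false x.1⟩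
      have h2 : lamU = 0 := specRad_empty _
      have h3 : lamW = 0 := specRad_empty _
      rw [h1, h2, h3]
      simpa using sq_nonneg opN
    | inr h =>
      obtain ⟨x, hx, hAx⟩ := exists_eigvec_specRad (adjMat_herm G)
      set u : {a // a ∈ U} → ℝ := fun j => x j.1 with hu
      set v : {a // a ∈ Uᶜ} → ℝ := fun j => x j.1 with hv
      set N : Matrix {a // a ∈ Uᶜ} {a // a ∈ U} ℝ := fun i j => adjMat G i.1 j.1 with hN
      have hAx' : ∀ i : Fin n, ∑ j, adjMat G i j * x j = lam * x i := by
        intro i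
        have := congrFun hAx i
        simpa [Matrix.mulVec, dotProduct] using this
      have hvecU : (inducedMat G U).mulVec u + (cutMat G U).mulVec v = lam • u := by
        funext i
        have key : (∑ j ∈ U, adjMat G i.1 j * x j) + ∑ j ∈ Uᶜ, adjMat G i.1 j * x j
            = lam * x i.1 := by
          rw [Finset.sum_add_sum_compl U (fun j => adjMat G i.1 j * x j)]
          exact hAx' i.1
        have e1 : (inducedMat G U).mulVec u i = ∑ j ∈ U, adjMat G i.1 j * x j := by
          rw [Matrix.mulVec, dotProduct, Finset.univ_eq_attach,
            ← Finset.sum_attach U (fun j => adjMat G i.1 j * x j)]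
          rfl
        have e2 : (cutMat G U).mulVec v i = ∑ j ∈ Uᶜ, adjMat G i.1 j * x j := by
          rw [Matrix.mulVec, dotProduct, Finset.univ_eq_attach,
            ← Finset.sum_attach Uᶜ (fun j => adjMat G i.1 j * x j)]
          rfl
        simp only [Pi.add_apply, Pi.smul_apply, smul_eq_mul, e1, e2, key]; rfl
      have hvecW : (inducedMat G Uᶜ).mulVec v + N.mulVec u = lam • v := by
        funext i
        have key : (∑ j ∈ Uᶜ, adjMat G i.1 j * x j) + ∑ j ∈ U, adjMat G i.1 j * x j
            = lam * x i.1 := by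
          have := Finset.sum_add_sum_compl Uᶜ (fun j => adjMat G i.1 j * x j)
          rw [compl_compl] at this
          rw [this]
          exact hAx' i.1
        have e1 : (inducedMat G Uᶜ).mulVec v i = ∑ j ∈ Uᶜ, adjMat G i.1 j * x j := by
          rw [Matrix.mulVec, dotProduct, Finset.univ_eq_attach,
            ← Finset.sum_attach Uᶜ (fun j => adjMat G i.1 j * x j)]
          rfl
        have e2 : N.mulVec u i = ∑ j ∈ U, adjMat G i.1 j * x j := by
          rw [Matrix.mulVec, dotProduct, Finset.univ_eq_attach,
            ← Finset.sum_attach U (fun j => adjMat G i.1 j * x j)]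
        simp only [Pi.add_apply, Pi.smul_apply, smul_eq_mul, e1, e2, key]; rfl
      by_cases ha : u = 0
      · -- lam is an eigenvalue of the W-induced matrix
        have hv0 : v ≠ 0 := by
          intro hv0
          apply hx
          funext i
          by_cases hi : i ∈ U
          · exact congrFun ha ⟨i, hi⟩
          · exact congrFun hv0 ⟨i, Finset.mem_compl.mpr hi⟩
        have hW : (inducedMat G Uᶜ).mulVec v = lam • v := by
          rw [ha, Matrix.mulVec_zero, add_zero] at hvecW
          exact hvecW
        have hle : lam ≤ lamW := eig_le_specRad (inducedMat_herm G Uᶜ) hv0 hW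
        have : (lam - lamU) * (lam - lamW) ≤ 0 :=
          mul_nonpos_of_nonneg_of_nonpos (by linarith) (by linarith)
        exact le_trans this (sq_nonneg opN)
      · by_cases hb : v = 0
        · have hU' : (inducedMat G U).mulVec u = lam • u := by
            rw [hb, Matrix.mulVec_zero, add_zero] at hvecU
            exact hvecU
          have hle : lam ≤ lamU := eig_le_specRad (inducedMat_herm G U) ha hU'
          have : (lam - lamU) * (lam - lamW) ≤ 0 :=
            mul_nonpos_of_nonpos_of_nonneg (by linarith) (by linarith)
          exact le_trans this (sq_nonneg opN)
        · set a2 := dotProduct u u with ha2def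
          set b2 := dotProduct v v with hb2def
          set c := dotProduct u ((cutMat G U).mulVec v) with hcdef
          have ha2 : 0 < a2 := dot_self_pos ha
          have hb2 : 0 < b2 := dot_self_pos hb
          have hU1 : dotProduct u ((inducedMat G U).mulVec u) + c = lam * a2 := by
            have := congrArg (dotProduct u) hvecU
            rwa [dotProduct_add, dotProduct_smul, smul_eq_mul] at this
          have hswap : dotProduct v (N.mulVec u) = c := by
            rw [hcdef]
            simp only [dotProduct, Matrix.mulVec, Finset.mul_sum]
            rw [Finset.sum_comm]
            refine Finset.sum_congr rfl fun i _ => Finset.sum_congr rfl fun j _ => ?_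
            have : N j i = cutMat G U i j := by
              simp only [hN, cutMat]
              exact hadjsym _ _
            rw [this]
            ring
          have hW1 : dotProduct v ((inducedMat G Uᶜ).mulVec v) + c = lam * b2 := by
            have := congrArg (dotProduct v) hvecW
            rwa [dotProduct_add, dotProduct_smul, smul_eq_mul, hswap] at this
          have hrayU : dotProduct u ((inducedMat G U).mulVec u) ≤ lamU * a2 :=
            rayleigh_le_specRad (inducedMat_herm G U) u
          have hrayW : dotProduct v ((inducedMat G Uᶜ).mulVec v) ≤ lamW * b2 :=
            rayleigh_le_specRad (inducedMat_herm G Uᶜ) v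
          have hcu : (lam - lamU) * a2 ≤ c := by rw [sub_mul]; linarith
          have hcw : (lam - lamW) * b2 ≤ c := by rw [sub_mul]; linarith
          have hc0 : 0 ≤ c :=
            le_trans (mul_nonneg (by linarith) ha2.le) hcu
          -- Cauchy-Schwarz bound on c
          have hcs : c ≤ Real.sqrt a2 * (opN * Real.sqrt b2) := by
            set w := (cutMat G U).mulVec v with hwdef
            have h1 : c ^ 2 ≤ a2 * dotProduct w w := by
              have := Finset.sum_mul_sq_le_sq_mul_sq Finset.univ u w
              calc c ^ 2 = (∑ i, u i * w i) ^ 2 := by rw [hcdef]; rfl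
                _ ≤ (∑ i, u i ^ 2) * ∑ i, w i ^ 2 := this
                _ = a2 * dotProduct w w := by
                    rw [ha2def, dotProduct, dotProduct]
                    congr 1 <;> exact Finset.sum_congr rfl fun i _ => pow_two _
            have h2 : c = Real.sqrt (c ^ 2) := (Real.sqrt_sq hc0).symm
            rw [h2]
            calc Real.sqrt (c ^ 2) ≤ Real.sqrt (a2 * dotProduct w w) :=
                  Real.sqrt_le_sqrt h1
              _ = Real.sqrt a2 * Real.sqrt (dotProduct w w) :=
                  Real.sqrt_mul ha2.le _
              _ ≤ Real.sqrt a2 * (opN * Real.sqrt b2) := by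
                  apply mul_le_mul_of_nonneg_left _ (Real.sqrt_nonneg _)
                  exact sqrt_mulVec_le (cutMat G U) v
          have hwmul : Real.sqrt a2 * Real.sqrt a2 = a2 := Real.mul_self_sqrt ha2.le
          have hwmul' : Real.sqrt b2 * Real.sqrt b2 = b2 := Real.mul_self_sqrt hb2.le
          have hbig : ((lam - lamU) * (lam - lamW)) * (a2 * b2) ≤ opN ^ 2 * (a2 * b2) := by
            calc ((lam - lamU) * (lam - lamW)) * (a2 * b2)
                = ((lam - lamU) * a2) * ((lam - lamW) * b2) := by ring
              _ ≤ c * c :=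
                  mul_le_mul hcu hcw (mul_nonneg (by linarith) hb2.le) hc0
              _ ≤ (Real.sqrt a2 * (opN * Real.sqrt b2)) * (Real.sqrt a2 * (opN * Real.sqrt b2)) :=
                  mul_le_mul hcs hcs hc0
                    (mul_nonneg (Real.sqrt_nonneg _)
                      (mul_nonneg (opNorm_nonneg _) (Real.sqrt_nonneg _)))
              _ = opN ^ 2 * (a2 * b2) := by
                  rw [show (Real.sqrt a2 * (opN * Real.sqrt b2)) * (Real.sqrt a2 * (opN * Real.sqrt b2))
                    = (Real.sqrt a2 * Real.sqrt a2) * (opN * opN) * (Real.sqrt b2 * Real.sqrt b2) from by ring,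
                    hwmul, hwmul']
                  ring
          exact le_of_mul_le_mul_right hbig (mul_pos ha2 hb2)
  · -- second inequality
    have hfr : frobSq (cutMat G U) = ∑ i ∈ U, ∑ w ∈ Uᶜ, if G.Adj i w then (1 : ℝ) else 0 := by
      have step : ∀ i : {a // a ∈ U}, (∑ j, cutMat G U i j ^ 2)
          = ∑ w ∈ Uᶜ, if G.Adj i.1 w then (1 : ℝ) else 0 := by
        intro i
        rw [Finset.univ_eq_attach,
          ← Finset.sum_attach Uᶜ (fun w => if G.Adj i.1 w then (1:ℝ) else 0)]
        refine Finset.sum_congr rfl fun j _ => ?_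
        simp only [cutMat, adjMat]
        split <;> norm_num
      rw [frobSq]
      rw [Finset.univ_eq_attach,
        ← Finset.sum_attach U (fun i => ∑ w ∈ Uᶜ, if G.Adj i w then (1:ℝ) else 0)]
      exact Finset.sum_congr rfl fun i _ => step i
    rw [← hfr]
    exact opNorm_sq_le_frobSq _
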